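/- Let n be a natural number with n > 1, and for each positive integer d set b(d) = ⌈2(2^{d−1} − 1)/3⌉ (the ceiling; as a natural number b(d) = (2·(2^{d−1} − 1) + 2)/3 with integer division). Then the integer sum ∑_{d ∣ n} μ(n/d)·b(d), taken over the positive divisors d of n, is strictly positive. -/

import Mathlib

lemma bsum_le (m : ℕ) : (∑ d ∈ Finset.Icc 1 m, 2 ^ d / 3) + 1 ≤ 2 ^ m := by
  induction m with
  | zero => simp
  | succ m ih =>
    rw [show m + 1 = m.succ from rfl, Finset.sum_Icc_succ_top (by omega)]
    have h1 : 2 ^ (m + 1) / 3 ≤ 2 ^ m := by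
      have : 2 ^ (m + 1) / 3 ≤ 2 ^ (m + 1) / 2 := Nat.div_le_div_left (by omega) (by omega)
      rw [pow_succ] at this
      omega
    have h2 : 2 ^ (m + 1) = 2 * 2 ^ m := by rw [pow_succ]; ring
    omega

open ArithmeticFunction ArithmeticFunction.Moebius in
theorem moebius_sum_b_pos (n : ℕ) (hn : 1 < n) :
    0 < ∑ d ∈ n.divisors,
      (μ (n / d) : ℤ) * (((2 * (2 ^ (d - 1) - 1) + 2) / 3 : ℕ) : ℤ) := by
  have hrw : ∑ d ∈ n.divisors,
      (μ (n / d) : ℤ) * (((2 * (2 ^ (d - 1) - 1) + 2) / 3 : ℕ) : ℤ)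
      = ∑ d ∈ n.divisors, (μ (n / d) : ℤ) * ((2 ^ d / 3 : ℕ) : ℤ) := by
    refine Finset.sum_congr rfl fun d hd => ?_
    have hd1 : 1 ≤ d := Nat.pos_of_mem_divisors hd
    have h2 : 2 * 2 ^ (d - 1) = 2 ^ d := by
      conv_rhs => rw [show d = (d - 1) + 1 by omega]
      rw [pow_succ]; ring
    have h3 : 1 ≤ 2 ^ (d - 1) := Nat.one_le_two_pow
    congr 2
    omega
  rw [hrw]
  rcases Nat.lt_or_ge n 4 with h4 | h4
  · interval_cases n
    · rw [show Nat.divisors 2 = {1, 2} by decide]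
      simp [ArithmeticFunction.moebius_apply_prime Nat.prime_two]
    · rw [show Nat.divisors 3 = {1, 3} by decide]
      simp [ArithmeticFunction.moebius_apply_prime Nat.prime_three]
  -- general case n ≥ 4
  have hmem : n ∈ n.divisors := Nat.mem_divisors_self n (by omega)
  rw [← Finset.add_sum_erase _ _ hmem, Nat.div_self (by omega)]
  simp only [ArithmeticFunction.moebius_apply_one, Int.cast_one, one_mul]
  set m := n / 2 with hm
  have hsub : n.divisors.erase n ⊆ Finset.Icc 1 m := by
    intro d hd
    rw [Finset.mem_erase] at hd
    obtain ⟨hne, hdvd⟩ := hd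
    rw [Nat.mem_divisors] at hdvd
    obtain ⟨⟨k, hk⟩, hn0⟩ := hdvd
    have hd1 : 1 ≤ d := by
      rcases Nat.eq_zero_or_pos d with h | h
      · subst h; simp at hk; omega
      · exact h
    have hk2 : 2 ≤ k := by
      rcases Nat.lt_or_ge k 2 with h | h
      · interval_cases k <;> omega
      · exact h
    have : 2 * d ≤ n := by nlinarith
    rw [Finset.mem_Icc]
    exact ⟨hd1, by rw [hm]; omega⟩
  have hbound : -((2 : ℤ) ^ m - 1) ≤ ∑ d ∈ n.divisors.erase n,
      (μ (n / d) : ℤ) * ((2 ^ d / 3 : ℕ) : ℤ) := by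
    have h1 : ∑ d ∈ n.divisors.erase n, -(((2 ^ d / 3 : ℕ) : ℤ))
        ≤ ∑ d ∈ n.divisors.erase n, (μ (n / d) : ℤ) * ((2 ^ d / 3 : ℕ) : ℤ) := by
      refine Finset.sum_le_sum fun d hd => ?_
      have hmu : (-1 : ℤ) ≤ μ (n / d) := by
        rcases ArithmeticFunction.moebius_eq_or (n / d) with h | h | h <;> simp [h]
      calc -(((2 ^ d / 3 : ℕ) : ℤ)) = (-1) * ((2 ^ d / 3 : ℕ) : ℤ) := by ring
        _ ≤ (μ (n / d) : ℤ) * ((2 ^ d / 3 : ℕ) : ℤ) :=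
          mul_le_mul_of_nonneg_right hmu (by positivity)
    rw [Finset.sum_neg_distrib] at h1
    have h2 : ∑ d ∈ n.divisors.erase n, (((2 ^ d / 3 : ℕ) : ℤ))
        ≤ ∑ d ∈ Finset.Icc 1 m, (((2 ^ d / 3 : ℕ) : ℤ)) :=
      Finset.sum_le_sum_of_subset_of_nonneg hsub (fun _ _ _ => by positivity)
    have h3 : ∑ d ∈ Finset.Icc 1 m, (((2 ^ d / 3 : ℕ) : ℤ)) ≤ (2 : ℤ) ^ m - 1 := by
      have h4 : ((∑ d ∈ Finset.Icc 1 m, 2 ^ d / 3 : ℕ) : ℤ) + 1 ≤ (2 : ℤ) ^ m := by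
        exact_mod_cast bsum_le m
      rw [Nat.cast_sum] at h4
      linarith
    linarith
  have hmain : (2 : ℤ) ^ m ≤ ((2 ^ n / 3 : ℕ) : ℤ) := by
    have hmn : m + 2 ≤ n := by rw [hm]; omega
    have h5 : 3 * 2 ^ m ≤ 2 ^ n := by
      calc 3 * 2 ^ m ≤ 4 * 2 ^ m := by omega
        _ = 2 ^ (m + 2) := by ring
        _ ≤ 2 ^ n := Nat.pow_le_pow_right (by omega) hmn
    have h6 : 2 ^ m ≤ 2 ^ n / 3 := (Nat.le_div_iff_mul_le (by omega)).2 (by omega)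
    exact_mod_cast h6
  have hpos : (0 : ℤ) < 2 ^ m := by positivity
  linarith
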